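/- With T, e, L, λ as above, the map d(g) = L*λ(g) − λ(g)L* restricts, for each g ∈ Aut(T), to a bounded operator on ℓ₂(T) of norm at most 2, and d : Aut(T) → B(ℓ₂(T)) is a bounded derivation: d(gf) = d(g)λ(f) + λ(g)d(f) for all g, f ∈ Aut(T). -/

import Mathlib

open scoped ENNReal

noncomputable section

/-- The vertex set of the `ℵ₀`-regular tree, realised as the free group `F_∞`. -/
abbrev V : Type := FreeGroup ℕ

/-- The Cayley graph of `F_∞` with respect to its free generating set:
the `ℵ₀`-regular tree `T`. -/
def treeGraph : SimpleGraph V :=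
  SimpleGraph.fromRel (fun s t => ∃ i : ℕ, t = s * FreeGroup.of i)

/-- The automorphism group `Aut(T)` of the `ℵ₀`-regular tree. -/
abbrev TreeAut := treeGraph ≃g treeGraph

/-- `ℓ_p(T)`. -/
abbrev lpT (p : ℝ≥0∞) := lp (fun _ : V => ℂ) p

lemma memℓp_comp {p : ℝ≥0∞} (g : V ≃ V) {x : V → ℂ} (h : Memℓp x p) :
    Memℓp (fun v => x (g v)) p := by
  rcases ENNReal.trichotomy p with rfl | rfl | hp
  · rw [memℓp_zero_iff] at h ⊢
    exact Set.Finite.preimage g.injective.injOn h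
  · rw [memℓp_infty_iff] at h ⊢
    apply h.mono
    rintro r ⟨v, rfl⟩
    exact ⟨g v, rfl⟩
  · apply memℓp_gen
    exact (g.summable_iff (f := fun v => ‖x v‖ ^ p.toReal)).2 ((memℓp_gen_iff hp).1 h)

/-- The shift representation of permutations of `T` on `ℂ^T`: `λ(g)x = x(g⁻¹ ·)`. -/
def lamFull (g : V ≃ V) : (V → ℂ) →ₗ[ℂ] (V → ℂ) where
  toFun x := fun v => x (g.symm v)
  map_add' _ _ := rfl
  map_smul' _ _ := rfl

/-- The shift representation of permutations of `T` on `ℓ_p(T)`: `λ(g)x = x(g⁻¹ ·)`. -/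
def lam (p : ℝ≥0∞) (g : V ≃ V) : lpT p →ₗ[ℂ] lpT p where
  toFun x := ⟨fun v => x (g.symm v), memℓp_comp g.symm (lp.memℓp x)⟩
  map_add' _ _ := rfl
  map_smul' _ _ := rfl

attribute [local instance] Classical.propDecidable

/-- The fixed root `e` of the tree. -/
def root : V := 1

/-- `ŝ`: the parent of the vertex `s`, i.e. the penultimate vertex on the geodesic from
the root `e` to `s` (with `ê = e`), obtained by dropping the last letter of the reduced
word `s`. -/
def parent (s : V) : V := FreeGroup.mk s.toWord.dropLast

/-- The adjoint `L*` of the parent operator `L`, as an operator on `ℂ^T`: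
`(L* y)(s) = y(ŝ)` for `s ≠ e` and `(L* y)(e) = 0`; equivalently `L*(𝟙_s) = Σ_{t̂ = s} 𝟙_t`. -/
def Lstar : (V → ℂ) →ₗ[ℂ] (V → ℂ) where
  toFun x := fun v => if v = root then 0 else x (parent v)
  map_add' x y := by
    funext v; by_cases h : v = root <;> simp [h]
  map_smul' c x := by
    funext v; by_cases h : v = root <;> simp [h]

/-- The derivation `d(g) = L*λ(g) − λ(g)L*`, as an operator on `ℂ^T`. -/
def dtree (g : V ≃ V) : (V → ℂ) →ₗ[ℂ] (V → ℂ) :=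
  Lstar ∘ₗ lamFull g - lamFull g ∘ₗ Lstar


namespace TreeProof
open FreeGroup List

/-- peeling a cons off a reduced word. -/
lemma reduce_of_cons {a : ℕ × Bool} {l : List (ℕ × Bool)}
    (h : reduce (a :: l) = a :: l) : reduce l = l := by
  have hle : (reduce l).length ≤ l.length := (reduce.red).length_le
  rw [reduce.cons] at h
  cases hr : reduce l with
  | nil =>
    rw [hr] at h
    simp only at h
    injection h
  | cons b t =>
    rw [hr] at h
    dsimp only at h
    split_ifs at h with hc
    · exfalso
      have h1 := congrArg List.length h
      have h2 := congrArg List.length hr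
      simp at h1 h2
      omega
    · injection h

lemma reduce_cons_self {a : ℕ × Bool} {l : List (ℕ × Bool)} (hl : reduce l = l)
    (h : ∀ b t, l = b :: t → ¬(a.1 = b.1 ∧ a.2 = !b.2)) :
    reduce (a :: l) = a :: l := by
  rw [reduce.cons, hl]
  cases l with
  | nil => rfl
  | cons b t =>
    dsimp only
    rw [if_neg (h b t rfl)]

lemma invRev_tail_eq_dropLast (w : List (ℕ × Bool)) :
    invRev ((invRev w).tail) = w.dropLast := by
  set f : ℕ × Bool → ℕ × Bool := fun g => (g.1, !g.2) with hf
  have hff : ∀ l : List (ℕ × Bool), List.map f (List.map f l) = l := by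
    intro l
    rw [List.map_map]
    have : f ∘ f = id := by funext g; simp [hf]
    rw [this, List.map_id]
  have h1 : (invRev w).tail = ((List.map f w).dropLast).reverse := by
    rw [invRev, List.tail_reverse]
  rw [h1, invRev, List.map_reverse, List.reverse_reverse, ← List.map_dropLast, hff]

lemma reduce_dropLast {w : List (ℕ × Bool)} (h : reduce w = w) :
    reduce w.dropLast = w.dropLast := by
  have hu : reduce (invRev w) = invRev w := by rw [reduce_invRev, h]
  have ht : reduce ((invRev w).tail) = (invRev w).tail := by
    cases hc : invRev w with
    | nil => simp
    | cons a t =>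
      rw [hc] at hu
      exact reduce_of_cons hu
  have := invRev_tail_eq_dropLast w
  calc reduce w.dropLast = reduce (invRev ((invRev w).tail)) := by rw [this]
    _ = invRev (reduce ((invRev w).tail)) := reduce_invRev
    _ = invRev ((invRev w).tail) := by rw [ht]
    _ = w.dropLast := this

lemma reduce_append_single {w : List (ℕ × Bool)} {i : ℕ} {b : Bool}
    (h : reduce w = w) (hne : w.getLast? ≠ some (i, !b)) :
    reduce (w ++ [(i, b)]) = w ++ [(i, b)] := by
  have hinv : invRev (w ++ [(i, b)]) = (i, !b) :: invRev w := by
    simp [invRev]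
  have hu : reduce (invRev w) = invRev w := by rw [reduce_invRev, h]
  have key : reduce ((i, !b) :: invRev w) = (i, !b) :: invRev w := by
    apply reduce_cons_self hu
    rintro c t hct hc
    -- head of invRev w corresponds to getLast of w
    have hhead : (invRev w).head? = some c := by rw [hct]; rfl
    have : w.getLast? = some (c.1, !c.2) := by
      have : (List.map (fun g : ℕ × Bool => (g.1, !g.2)) w).reverse.head?
          = (List.map (fun g : ℕ × Bool => (g.1, !g.2)) w).getLast? := List.head?_reverse
      rw [← invRev] at this
      rw [hhead, List.getLast?_map] at this
      cases hw : w.getLast? with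
      | none => rw [hw] at this; simp at this
      | some d =>
        rw [hw] at this
        simp only [Option.map_some] at this
        have hd : c = (d.1, !d.2) := Option.some.inj this
        rw [hd]
        simp
    apply hne
    obtain ⟨h1, h2⟩ := hc
    simp only at h1 h2
    rw [this, ← h1, ← h2]
  apply invRev_injective
  rw [← reduce_invRev, hinv]
  exact key

end TreeProof

namespace TreeProof2
open FreeGroup List TreeProof

lemma toWord_parent (s : V) : (parent s).toWord = s.toWord.dropLast := by
  rw [parent, toWord_mk, reduce_dropLast (reduce_toWord s)]

lemma length_toWord_parent (s : V) :
    (parent s).toWord.length = s.toWord.length - 1 := by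
  rw [toWord_parent, List.length_dropLast]

lemma root_ne_iff {s : V} : s ≠ root ↔ s.toWord.length ≠ 0 := by
  rw [root]
  constructor
  · intro h h0
    exact h (toWord_eq_nil_iff.1 (List.length_eq_zero_iff.1 h0))
  · intro h h1
    rw [h1, toWord_one] at h
    exact h rfl

lemma eq_root_of_length {s : V} (h : s.toWord.length = 0) : s = root := by
  by_contra hs
  exact root_ne_iff.1 hs h

lemma parent_root : parent root = root := by
  rw [parent, root, toWord_one]
  exact (one_eq_mk).symm

lemma inv_single (i : ℕ) (b : Bool) : (mk [(i,b)] : V)⁻¹ = mk [(i, !b)] := by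
  rw [inv_mk]
  congr 1

lemma single_mul_single_cancel (i : ℕ) (b : Bool) :
    (mk [(i, !b)] : V) * mk [(i, b)] = 1 := by
  rw [← inv_single i b, inv_mul_cancel]

lemma mul_last_cancel {s : V} {i : ℕ} {b : Bool}
    (hlast : s.toWord.getLast? = some (i, !b)) : s * mk [(i, b)] = parent s := by
  have hnil : s.toWord ≠ [] := by
    intro h0
    rw [h0] at hlast
    simp at hlast
  have hw : s.toWord = s.toWord.dropLast ++ [(i, !b)] := by
    conv_lhs => rw [← List.dropLast_append_getLast hnil]
    have hg : s.toWord.getLast hnil = (i, !b) := by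
      have h2 := (List.getLast?_eq_getLast hnil).symm.trans hlast
      exact Option.some_inj.1 h2
    rw [hg]
  calc s * mk [(i, b)] = mk s.toWord * mk [(i, b)] := by rw [mk_toWord]
    _ = mk (s.toWord.dropLast) * mk [(i, !b)] * mk [(i, b)] := by
        conv_lhs => rw [hw]
        rw [← mul_mk]
    _ = mk (s.toWord.dropLast) * (mk [(i, !b)] * mk [(i, b)]) := by rw [mul_assoc]
    _ = mk (s.toWord.dropLast) := by rw [single_mul_single_cancel, mul_one]
    _ = parent s := rfl

lemma toWord_mul_single {s : V} {i : ℕ} {b : Bool}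
    (hlast : s.toWord.getLast? ≠ some (i, !b)) :
    (s * mk [(i, b)]).toWord = s.toWord ++ [(i, b)] := by
  have : s * mk [(i, b)] = mk (s.toWord ++ [(i, b)]) := by
    rw [← mul_mk, mk_toWord]
  rw [this, toWord_mk, reduce_append_single (reduce_toWord s) hlast]

lemma adj_iff {s t : V} :
    treeGraph.Adj s t ↔ s ≠ t ∧ ∃ i b, t = s * mk [(i, b)] := by
  show (SimpleGraph.fromRel _).Adj s t ↔ _
  rw [SimpleGraph.fromRel_adj]
  constructor
  · rintro ⟨hne, h | h⟩
    · obtain ⟨i, rfl⟩ := h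
      exact ⟨hne, i, true, rfl⟩
    · obtain ⟨i, hs⟩ := h
      refine ⟨hne, i, false, ?_⟩
      rw [hs, mul_assoc]
      have : (of i : V) * mk [(i, false)] = 1 := by
        have := single_mul_single_cancel i false
        exact this
      rw [this, mul_one]
  · rintro ⟨hne, i, b, rfl⟩
    refine ⟨hne, ?_⟩
    cases b with
    | true => exact Or.inl ⟨i, rfl⟩
    | false =>
      refine Or.inr ⟨i, ?_⟩
      rw [mul_assoc]
      have : (mk [(i, false)] : V) * of i = 1 := by
        have := single_mul_single_cancel i true
        exact this
      rw [this, mul_one]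

lemma adj_cases {s t : V} (h : treeGraph.Adj s t) :
    (parent t = s ∧ t.toWord.length = s.toWord.length + 1) ∨
    (parent s = t ∧ s.toWord.length = t.toWord.length + 1) := by
  obtain ⟨hne, i, b, rfl⟩ := adj_iff.1 h
  by_cases hlast : s.toWord.getLast? = some (i, !b)
  · right
    have heq := mul_last_cancel hlast
    have hnil : s.toWord ≠ [] := by
      intro h0
      rw [h0] at hlast
      simp at hlast
    have hpos : 0 < s.toWord.length := List.length_pos_iff.2 hnil
    refine ⟨heq.symm, ?_⟩
    rw [heq, length_toWord_parent]
    omega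
  · left
    have htw := toWord_mul_single hlast
    constructor
    · rw [parent, htw, List.dropLast_concat, mk_toWord]
    · rw [htw, List.length_append]
      rfl

lemma adj_parent {s : V} (hs : s ≠ root) : treeGraph.Adj s (parent s) := by
  have hnil : s.toWord ≠ [] := fun h0 => (root_ne_iff.1 hs) (by rw [h0]; rfl)
  set a := s.toWord.getLast hnil with ha
  rw [adj_iff]
  have hlen : (parent s).toWord.length = s.toWord.length - 1 := length_toWord_parent s
  have hpos : 0 < s.toWord.length := List.length_pos_iff.2 hnil
  refine ⟨?_, a.1, !a.2, ?_⟩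
  · intro hcontra
    rw [← hcontra] at hlen
    omega
  · refine (mul_last_cancel ?_).symm
    rw [List.getLast?_eq_getLast hnil, ← ha]
    simp

lemma not_parent_both {s t : V} (h : treeGraph.Adj s t)
    (h1 : parent s = t) (h2 : parent t = s) : False := by
  have l1 : t.toWord.length = s.toWord.length - 1 := by
    rw [← h1, length_toWord_parent]
  have l2 : s.toWord.length = t.toWord.length - 1 := by
    rw [← h2, length_toWord_parent]
  rcases adj_cases h with ⟨_, hl⟩ | ⟨_, hl⟩ <;> omega

lemma length_parent_iter (s : V) (j : ℕ) :
    (parent^[j] s).toWord.length = s.toWord.length - j := by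
  induction j with
  | zero => simp
  | succ n ih =>
    rw [Function.iterate_succ_apply', length_toWord_parent, ih]
    omega

lemma parent_iter_eq_root {s : V} {j : ℕ} (h : s.toWord.length ≤ j) :
    parent^[j] s = root := by
  apply eq_root_of_length
  rw [length_parent_iter]
  omega

end TreeProof2

namespace TreeProof3
open FreeGroup List TreeProof TreeProof2

lemma aut_adj (h : TreeAut) {a b : V} (hadj : treeGraph.Adj a b) :
    treeGraph.Adj (h.toEquiv a) (h.toEquiv b) := h.map_rel_iff.2 hadj

lemma aut_symm_toEquiv (h : TreeAut) : h.symm.toEquiv = h.toEquiv.symm := rfl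

lemma bad_is_ancestor (h : TreeAut) :
    ∀ n (v : V), (h.toEquiv v).toWord.length = n + 1 → v ≠ root →
      h.toEquiv (parent v) ≠ parent (h.toEquiv v) →
      ∃ j, 1 ≤ j ∧ v = parent^[j] (h.toEquiv.symm root) := by
  intro n
  induction n with
  | zero =>
    intro v hn hv hbad
    have hhv : h.toEquiv v ≠ root := root_ne_iff.2 (by omega)
    have hc' : parent (h.toEquiv v) = root := by
      apply eq_root_of_length
      rw [length_toWord_parent, hn]
    set c := h.toEquiv.symm root with hcdef
    have hadj : treeGraph.Adj v c := by
      have h1 : treeGraph.Adj (h.toEquiv v) (parent (h.toEquiv v)) := adj_parent hhv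
      rw [hc'] at h1
      have h2 : h.toEquiv c = root := h.toEquiv.apply_symm_apply root
      rw [← h2] at h1
      exact h.map_rel_iff.1 h1
    have hcne : c ≠ parent v := by
      intro hcp
      apply hbad
      rw [← hcp, hcdef, h.toEquiv.apply_symm_apply, hc']
    rcases adj_cases hadj with ⟨hp, _⟩ | ⟨hp, _⟩
    · exact ⟨1, le_refl 1, by rw [Function.iterate_one, hp]⟩
    · exact absurd hp.symm hcne
  | succ n ih =>
    intro v hn hv hbad
    have hhv : h.toEquiv v ≠ root := root_ne_iff.2 (by omega)
    set c' := parent (h.toEquiv v) with hc'def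
    have hlc' : c'.toWord.length = n + 1 := by
      rw [hc'def, length_toWord_parent, hn]
      omega
    set c := h.toEquiv.symm c' with hcdef
    have hcc' : h.toEquiv c = c' := h.toEquiv.apply_symm_apply c'
    have hadj : treeGraph.Adj v c := by
      have h1 : treeGraph.Adj (h.toEquiv v) c' := adj_parent hhv
      rw [← hcc'] at h1
      exact h.map_rel_iff.1 h1
    have hcne : c ≠ parent v := by
      intro hcp
      apply hbad
      rw [← hcp, hcc']
    have hpc : parent c = v := by
      rcases adj_cases hadj with ⟨hp, _⟩ | ⟨hp, _⟩
      · exact hp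
      · exact absurd hp.symm hcne
    have hcroot : c ≠ root := by
      intro h0
      apply hv
      rw [← hpc, h0, parent_root]
    have hcbad : h.toEquiv (parent c) ≠ parent (h.toEquiv c) := by
      rw [hpc, hcc']
      intro h0
      have := congrArg (fun z : V => z.toWord.length) h0
      rw [hn, length_toWord_parent, hlc'] at this
      omega
    have hlen : (h.toEquiv c).toWord.length = n + 1 := by rw [hcc', hlc']
    obtain ⟨j, hj1, hj2⟩ := ih c hlen hcroot hcbad
    refine ⟨j + 1, by omega, ?_⟩
    rw [Function.iterate_succ_apply', ← hj2, hpc]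

end TreeProof3

namespace TreeProof4
open FreeGroup List TreeProof TreeProof2 TreeProof3

lemma lamFull_apply (g : V ≃ V) (x : V → ℂ) (v : V) :
    lamFull g x v = x (g.symm v) := rfl

lemma dtree_apply (g : V ≃ V) (x : V → ℂ) (v : V) :
    dtree g x v = (if v = root then 0 else x (g.symm (parent v)))
      - (if g.symm v = root then 0 else x (parent (g.symm v))) := rfl

variable (g : TreeAut)

/-- `g(e)`. -/
def gr : V := g.toEquiv root

/-- `|g(e)|`. -/
def NN : ℕ := (gr g).toWord.length

/-- the ancestors of `g(e)`: support of `d(g)`. -/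
def SS : Finset V := (Finset.range (NN g + 1)).image (fun j => parent^[j] (gr g))

lemma root_mem_SS : root ∈ SS g := by
  apply Finset.mem_image.2
  exact ⟨NN g, Finset.mem_range.2 (by omega), parent_iter_eq_root le_rfl⟩

lemma support_subset (x : V → ℂ) (v : V) (hv : dtree g.toEquiv x v ≠ 0) :
    v ∈ SS g := by
  by_cases h1 : v = root
  · rw [h1]; exact root_mem_SS g
  by_cases h2 : g.toEquiv.symm v = root
  · apply Finset.mem_image.2
    refine ⟨0, Finset.mem_range.2 (by omega), ?_⟩
    rw [Function.iterate_zero_apply, gr, ← h2, g.toEquiv.apply_symm_apply]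
  by_cases h3 : g.toEquiv.symm (parent v) = parent (g.toEquiv.symm v)
  · exfalso
    apply hv
    rw [dtree_apply, if_neg h1, if_neg h2, h3, sub_self]
  · -- v is bad for g.symm
    have hgv : (g.symm.toEquiv v).toWord.length ≠ 0 := by
      rw [aut_symm_toEquiv]
      exact root_ne_iff.1 h2
    obtain ⟨n, hn⟩ : ∃ n, (g.symm.toEquiv v).toWord.length = n + 1 := by
      refine ⟨(g.symm.toEquiv v).toWord.length - 1, by omega⟩
    obtain ⟨j, hj1, hj2⟩ := bad_is_ancestor g.symm n v hn h1 (by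
      rw [aut_symm_toEquiv]; exact h3)
    have hroot : g.symm.toEquiv.symm root = gr g := by
      rw [aut_symm_toEquiv, Equiv.symm_symm]; rfl
    rw [hroot] at hj2
    by_cases hj : j ≤ NN g
    · exact Finset.mem_image.2 ⟨j, Finset.mem_range.2 (by omega), hj2.symm⟩
    · exfalso
      apply h1
      rw [hj2]
      exact parent_iter_eq_root (by rw [← NN]; omega)

lemma length_anc (j : ℕ) : (parent^[j] (gr g)).toWord.length = NN g - j :=
  length_parent_iter (gr g) j

lemma anc_inj {j k : ℕ} (hj : j ≤ NN g) (hk : k ≤ NN g)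
    (h : parent^[j] (gr g) = parent^[k] (gr g)) : j = k := by
  have h1 := length_anc g j
  have h2 := length_anc g k
  rw [h] at h1
  omega

lemma anc_ne_root {j : ℕ} (hj : j < NN g) : parent^[j] (gr g) ≠ root := by
  apply root_ne_iff.2
  rw [length_anc]
  omega

lemma injP (x : V → ℂ) {v v' : V}
    (hv : v ∈ SS g) (hvr : v ≠ root) (hv' : v' ∈ SS g) (hvr' : v' ≠ root)
    (heq : g.toEquiv.symm (parent v) = g.toEquiv.symm (parent v')) : v = v' := by
  have hpp : parent v = parent v' := g.toEquiv.symm.injective heq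
  obtain ⟨j, hjm, rfl⟩ := Finset.mem_image.1 hv
  obtain ⟨k, hkm, rfl⟩ := Finset.mem_image.1 hv'
  rw [Finset.mem_range] at hjm hkm
  have hjN : j < NN g := by
    rcases Nat.lt_or_ge j (NN g) with h | h
    · exact h
    · exact absurd (parent_iter_eq_root (by rw [← NN]; omega)) hvr
  have hkN : k < NN g := by
    rcases Nat.lt_or_ge k (NN g) with h | h
    · exact h
    · exact absurd (parent_iter_eq_root (by rw [← NN]; omega)) hvr'
  rw [← Function.iterate_succ_apply' parent j, ← Function.iterate_succ_apply' parent k] at hpp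
  have := anc_inj g (by omega) (by omega) hpp
  have hjk : j = k := by omega
  rw [hjk]

lemma injQ_aux (x : V → ℂ) {j k : ℕ} (hj : j ≤ NN g) (hk : k ≤ NN g) (hjk : j < k)
    (hdv : dtree g.toEquiv x (parent^[j] (gr g)) ≠ 0)
    (hu : g.toEquiv.symm (parent^[j] (gr g)) ≠ root)
    (hu' : g.toEquiv.symm (parent^[k] (gr g)) ≠ root)
    (heq : parent (g.toEquiv.symm (parent^[j] (gr g)))
         = parent (g.toEquiv.symm (parent^[k] (gr g)))) : False := by
  set aj := parent^[j] (gr g) with haj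
  set ak := parent^[k] (gr g) with hak
  have hlj : aj.toWord.length = NN g - j := length_anc g j
  have hlk : ak.toWord.length = NN g - k := length_anc g k
  have hane : aj ≠ ak := by
    intro h0
    exact absurd (anc_inj g hj hk h0) (by omega)
  set u := g.toEquiv.symm aj with hudef
  set u' := g.toEquiv.symm ak with hu'def
  set c' := parent u with hc'def
  have hadj1 : treeGraph.Adj u c' := adj_parent hu
  have hadj2 : treeGraph.Adj u' c' := by rw [heq]; exact adj_parent hu'
  set c := g.toEquiv c' with hcdef
  have hadjc1 : treeGraph.Adj aj c := by
    have := aut_adj g hadj1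
    rwa [hudef, g.toEquiv.apply_symm_apply] at this
  have hadjc2 : treeGraph.Adj ak c := by
    have := aut_adj g hadj2
    rwa [hu'def, g.toEquiv.apply_symm_apply] at this
  -- length analysis
  rcases adj_cases hadjc1 with ⟨hp1, hl1⟩ | ⟨hp1, hl1⟩ <;>
    rcases adj_cases hadjc2 with ⟨hp2, hl2⟩ | ⟨hp2, hl2⟩
  · omega
  · omega
  · -- parent aj = c, parent c = ak : the good-vertex case
    have hgood : g.toEquiv.symm (parent aj) = parent (g.toEquiv.symm aj) := by
      rw [hp1, hcdef, g.toEquiv.symm_apply_apply, hc'def, hudef]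
    apply hdv
    rw [dtree_apply, if_neg (anc_ne_root g (by omega)), if_neg hu, hgood, sub_self]
  · omega

lemma injQ (x : V → ℂ) {v v' : V}
    (hv : v ∈ SS g) (hdv : dtree g.toEquiv x v ≠ 0) (hvr : g.toEquiv.symm v ≠ root)
    (hv' : v' ∈ SS g) (hdv' : dtree g.toEquiv x v' ≠ 0) (hvr' : g.toEquiv.symm v' ≠ root)
    (heq : parent (g.toEquiv.symm v) = parent (g.toEquiv.symm v')) : v = v' := by
  obtain ⟨j, hjm, rfl⟩ := Finset.mem_image.1 hv
  obtain ⟨k, hkm, rfl⟩ := Finset.mem_image.1 hv'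
  rw [Finset.mem_range] at hjm hkm
  rcases Nat.lt_trichotomy j k with h | h | h
  · exact absurd (injQ_aux g x (by omega) (by omega) h hdv hvr hvr' heq) (fun h => h)
  · rw [h]
  · exact absurd (injQ_aux g x (by omega) (by omega) h hdv' hvr' hvr heq.symm) (fun h => h)

end TreeProof4

namespace TreeProof5
open FreeGroup TreeProof TreeProof2 TreeProof3 TreeProof4

lemma memℓp_two_of_finite {f : V → ℂ} (h : {v | f v ≠ 0}.Finite) : Memℓp f 2 :=
  (memℓp_zero_iff.2 h).of_exponent_ge (by norm_num)

lemma memℓp_dtree (g : TreeAut) (x : V → ℂ) : Memℓp (dtree g.toEquiv x) 2 :=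
  memℓp_two_of_finite (Set.Finite.subset (SS g).finite_toSet
    (fun v hv => support_subset g x v hv))

lemma rpow_two_toReal : (2 : ℝ≥0∞).toReal = 2 := by norm_num

lemma norm_le_of_tsum_le {u : lpT 2} {w : lpT 2}
    (h : ∑' v, ‖(u : V → ℂ) v‖ ^ (2 : ℝ≥0∞).toReal
       ≤ ∑' v, ‖(w : V → ℂ) v‖ ^ (2 : ℝ≥0∞).toReal) : ‖u‖ ≤ ‖w‖ := by
  have hp : 0 < (2 : ℝ≥0∞).toReal := by norm_num
  have h1 := lp.norm_rpow_eq_tsum hp u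
  have h2 := lp.norm_rpow_eq_tsum hp w
  rw [← h1, ← h2, rpow_two_toReal] at h
  have h3 : ‖u‖ ^ (2 : ℕ) ≤ ‖w‖ ^ (2 : ℕ) := by
    rw [← Real.rpow_natCast ‖u‖ 2, ← Real.rpow_natCast ‖w‖ 2]
    exact_mod_cast h
  exact (pow_le_pow_iff_left₀ (norm_nonneg u) (norm_nonneg w) (by norm_num)).1 h3

lemma norm_bound (g : TreeAut) (x y : lpT 2)
    (hy : (y : V → ℂ) = dtree g.toEquiv (x : V → ℂ)) : ‖y‖ ≤ 2 * ‖x‖ := by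
  classical
  set r : ℝ := (2 : ℝ≥0∞).toReal with hrdef
  have hp : 0 < r := by rw [hrdef]; norm_num
  set Y : V → ℂ := dtree g.toEquiv (x : V → ℂ) with hYdef
  set P : V → ℂ := fun v =>
    if Y v ≠ 0 ∧ v ≠ root then (x : V → ℂ) (g.toEquiv.symm (parent v)) else 0 with hPdef
  set Q : V → ℂ := fun v =>
    if Y v ≠ 0 ∧ g.toEquiv.symm v ≠ root then (x : V → ℂ) (parent (g.toEquiv.symm v)) else 0
    with hQdef
  have hsupp : ∀ v, Y v ≠ 0 → v ∈ SS g := fun v hv => support_subset g _ v hv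
  have hPQ : ∀ v, Y v = P v - Q v := by
    intro v
    have hdt : Y v = (if v = root then 0 else (x : V → ℂ) (g.toEquiv.symm (parent v)))
        - (if g.toEquiv.symm v = root then 0
            else (x : V → ℂ) (parent (g.toEquiv.symm v))) := dtree_apply _ _ v
    by_cases h0 : Y v = 0
    · have hP : P v = 0 := by
        simp only [hPdef]
        exact if_neg (fun hc => hc.1 h0)
      have hQ : Q v = 0 := by
        simp only [hQdef]
        exact if_neg (fun hc => hc.1 h0)
      rw [hP, hQ, h0, sub_zero]
    · have hP : P v = if v = root then 0 else (x : V → ℂ) (g.toEquiv.symm (parent v)) := by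
        by_cases h1 : v = root
        · simp only [hPdef]
          rw [if_neg (fun hc : Y v ≠ 0 ∧ v ≠ root => hc.2 h1), if_pos h1]
        · simp only [hPdef]
          rw [if_pos ⟨h0, h1⟩, if_neg h1]
      have hQ : Q v = if g.toEquiv.symm v = root then 0
          else (x : V → ℂ) (parent (g.toEquiv.symm v)) := by
        by_cases h2 : g.toEquiv.symm v = root
        · simp only [hQdef]
          rw [if_neg (fun hc : Y v ≠ 0 ∧ g.toEquiv.symm v ≠ root => hc.2 h2), if_pos h2]
        · simp only [hQdef]
          rw [if_pos ⟨h0, h2⟩, if_neg h2]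
      rw [hdt, hP, hQ]
  have hPfin : {v | P v ≠ 0}.Finite := by
    apply Set.Finite.subset (SS g).finite_toSet
    intro v hv
    simp only [hPdef, Set.mem_setOf_eq] at hv
    by_cases hc : Y v ≠ 0 ∧ v ≠ root
    · exact hsupp v hc.1
    · rw [if_neg hc] at hv; exact absurd rfl hv
  have hQfin : {v | Q v ≠ 0}.Finite := by
    apply Set.Finite.subset (SS g).finite_toSet
    intro v hv
    simp only [hQdef, Set.mem_setOf_eq] at hv
    by_cases hc : Y v ≠ 0 ∧ g.toEquiv.symm v ≠ root
    · exact hsupp v hc.1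
    · rw [if_neg hc] at hv; exact absurd rfl hv
  set Pl : lpT 2 := ⟨P, memℓp_two_of_finite hPfin⟩ with hPl
  set Ql : lpT 2 := ⟨Q, memℓp_two_of_finite hQfin⟩ with hQl
  have hyPQ : y = Pl - Ql := by
    apply lp.ext
    rw [lp.coeFn_sub, hy]
    funext v
    exact hPQ v
  have hxsum : Summable (fun v => ‖(x : V → ℂ) v‖ ^ r) :=
    (memℓp_gen_iff hp).1 (lp.memℓp x)
  -- bound for Pl
  have hPbound : ‖Pl‖ ≤ ‖x‖ := by
    apply norm_le_of_tsum_le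
    rw [← hrdef]
    set T : Finset V := (SS g).filter (fun v => Y v ≠ 0 ∧ v ≠ root) with hT
    have e1 : ∑' v, ‖(Pl : V → ℂ) v‖ ^ r = ∑ v ∈ T, ‖P v‖ ^ r := by
      apply tsum_eq_sum
      intro v hv
      have hP0 : P v = 0 := by
        rw [hPdef]
        apply if_neg
        intro hc
        exact hv (Finset.mem_filter.2 ⟨hsupp v hc.1, hc⟩)
      rw [show (Pl : V → ℂ) v = P v from rfl, hP0, norm_zero, Real.zero_rpow hp.ne']
    have e2 : ∑ v ∈ T, ‖P v‖ ^ r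
        = ∑ v ∈ T, ‖(x : V → ℂ) (g.toEquiv.symm (parent v))‖ ^ r := by
      apply Finset.sum_congr rfl
      intro v hv
      obtain ⟨_, hc⟩ := Finset.mem_filter.1 hv
      simp only [hPdef]
      rw [if_pos hc]
    have e3 : ∑ v ∈ T, ‖(x : V → ℂ) (g.toEquiv.symm (parent v))‖ ^ r
        = ∑ w ∈ T.image (fun v => g.toEquiv.symm (parent v)), ‖(x : V → ℂ) w‖ ^ r := by
      symm
      apply Finset.sum_image
      intro v hv v' hv' hvv'
      obtain ⟨hm, _, hr1⟩ := Finset.mem_filter.1 hv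
      obtain ⟨hm', _, hr1'⟩ := Finset.mem_filter.1 hv'
      exact injP g (x : V → ℂ) hm hr1 hm' hr1' hvv'
    rw [e1, e2, e3]
    exact Summable.sum_le_tsum _ (fun v _ => Real.rpow_nonneg (norm_nonneg _) r) hxsum
  -- bound for Ql
  have hQbound : ‖Ql‖ ≤ ‖x‖ := by
    apply norm_le_of_tsum_le
    rw [← hrdef]
    set T : Finset V := (SS g).filter (fun v => Y v ≠ 0 ∧ g.toEquiv.symm v ≠ root) with hT
    have e1 : ∑' v, ‖(Ql : V → ℂ) v‖ ^ r = ∑ v ∈ T, ‖Q v‖ ^ r := by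
      apply tsum_eq_sum
      intro v hv
      have hQ0 : Q v = 0 := by
        rw [hQdef]
        apply if_neg
        intro hc
        exact hv (Finset.mem_filter.2 ⟨hsupp v hc.1, hc⟩)
      rw [show (Ql : V → ℂ) v = Q v from rfl, hQ0, norm_zero, Real.zero_rpow hp.ne']
    have e2 : ∑ v ∈ T, ‖Q v‖ ^ r
        = ∑ v ∈ T, ‖(x : V → ℂ) (parent (g.toEquiv.symm v))‖ ^ r := by
      apply Finset.sum_congr rfl
      intro v hv
      obtain ⟨_, hc⟩ := Finset.mem_filter.1 hv
      simp only [hQdef]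
      rw [if_pos hc]
    have e3 : ∑ v ∈ T, ‖(x : V → ℂ) (parent (g.toEquiv.symm v))‖ ^ r
        = ∑ w ∈ T.image (fun v => parent (g.toEquiv.symm v)), ‖(x : V → ℂ) w‖ ^ r := by
      symm
      apply Finset.sum_image
      intro v hv v' hv' hvv'
      obtain ⟨hm, hy0, hr1⟩ := Finset.mem_filter.1 hv
      obtain ⟨hm', hy0', hr1'⟩ := Finset.mem_filter.1 hv'
      exact injQ g (x : V → ℂ) hm hy0 hr1 hm' hy0' hr1' hvv'
    rw [e1, e2, e3]
    exact Summable.sum_le_tsum _ (fun v _ => Real.rpow_nonneg (norm_nonneg _) r) hxsum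
  calc ‖y‖ = ‖Pl - Ql‖ := by rw [hyPQ]
    _ ≤ ‖Pl‖ + ‖Ql‖ := norm_sub_le _ _
    _ ≤ ‖x‖ + ‖x‖ := add_le_add hPbound hQbound
    _ = 2 * ‖x‖ := by ring

lemma deriv_identity (g f : TreeAut) (x : V → ℂ) :
    dtree (f.trans g).toEquiv x
      = dtree g.toEquiv (lamFull f.toEquiv x) + lamFull g.toEquiv (dtree f.toEquiv x) := by
  funext v
  have hsymm : ∀ w : V, (f.trans g).toEquiv.symm w = f.toEquiv.symm (g.toEquiv.symm w) :=
    fun _ => rfl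
  simp only [Pi.add_apply, dtree_apply, lamFull_apply, hsymm]
  ring

end TreeProof5

/-- The map `d(g) = L*λ(g) − λ(g)L*` restricts, for each `g ∈ Aut(T)`, to a bounded
operator on `ℓ₂(T)` of norm at most `2`, and `d : Aut(T) → B(ℓ₂(T))` is a bounded
derivation: `d(gf) = d(g)λ(f) + λ(g)d(f)`. -/
theorem dtree_bounded_derivation :
    (∀ g : TreeAut, ∀ x : lpT 2, Memℓp (dtree g.toEquiv (x : V → ℂ)) 2) ∧
    (∀ g : TreeAut, ∀ (x y : lpT 2),
      (y : V → ℂ) = dtree g.toEquiv (x : V → ℂ) → ‖y‖ ≤ 2 * ‖x‖) ∧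
    (∀ g f : TreeAut, ∀ x : lpT 2,
      dtree (f.trans g).toEquiv (x : V → ℂ)
        = dtree g.toEquiv (lamFull f.toEquiv (x : V → ℂ))
          + lamFull g.toEquiv (dtree f.toEquiv (x : V → ℂ))) := 
  ⟨fun g x => TreeProof5.memℓp_dtree g x,
   fun g x y hy => TreeProof5.norm_bound g x y hy,
   fun g f x => TreeProof5.deriv_identity g f x⟩
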